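/- Let G = (V,E) be a finite simple graph, let ℓ be a positive integer and ε > 0 a real, and suppose G is (ℓ, 1/2 − ε)-sparse. Then every resolution refutation of the CNF formula Col(G,4) contains a clause of width at least ℓ/4. -/

import Mathlib

/-- The set of edges of `G` with both endpoints in `U`. -/
def EdgesWithin {V : Type*} (G : SimpleGraph V) (U : Set V) : Set (Sym2 V) :=
  {e ∈ G.edgeSet | ∀ v ∈ e, v ∈ U}

/-- A graph is `(ℓ, ε)`-sparse if every vertex set `U` of size at most `ℓ`
spans at most `(1+ε)|U|` edges. -/
def Sparse {V : Type*} (G : SimpleGraph V) (ℓ : ℕ) (ε : ℝ) : Prop :=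
  ∀ U : Set V, U.ncard ≤ ℓ → ((EdgesWithin G U).ncard : ℝ) ≤ (1 + ε) * U.ncard

/-- A clause over variables `α`: a finite set of literals, where a literal is a
variable together with a polarity (`true` = positive, `false` = negated). -/
abbrev Clause (α : Type*) := Finset (α × Bool)

/-- `C` is obtained from `C₁` and `C₂` by the resolution rule: `C₁ = B ∨ x`,
`C₂ = C' ∨ ¬x` and `C = B ∨ C'`. -/
def IsResolvent {α : Type*} [DecidableEq α] (C₁ C₂ C : Clause α) : Prop :=
  ∃ x : α, (x, true) ∈ C₁ ∧ (x, false) ∈ C₂ ∧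
    C = (C₁.erase (x, true)) ∪ (C₂.erase (x, false))

/-- A resolution refutation of the CNF formula (clause set) `Fm`: a sequence of clauses
ending with the empty clause in which every clause is an axiom of `Fm` or the resolvent
of two earlier clauses. -/
def IsResolutionRefutation {α : Type*} [DecidableEq α]
    (Fm : Set (Clause α)) (D : List (Clause α)) : Prop :=
  D.getLast? = some ∅ ∧
  ∀ i (hi : i < D.length), D[i] ∈ Fm ∨
    ∃ j j', ∃ (hj : j < i) (hj' : j' < i),
      IsResolvent (D[j]'(hj.trans hi)) (D[j']'(hj'.trans hi)) D[i]

/-- The CNF formula `Col(G,k)` expressing that `G` is `k`-colourable. -/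
def ColCNF {V : Type*} [Fintype V] (G : SimpleGraph V) (k : ℕ) [DecidableEq V] :
    Set (Clause (V × Fin k)) :=
  {C | (∃ v : V, C = Finset.univ.image fun i : Fin k => ((v, i), true)) ∨
       (∃ (v : V) (i i' : Fin k), i ≠ i' ∧ C = {((v, i), false), ((v, i'), false)}) ∨
       (∃ (u v : V) (i : Fin k), G.Adj u v ∧ C = {((u, i), false), ((v, i), false)})}

set_option maxHeartbeats 1000000

namespace Stmt3Aux

open Finset
open scoped Classical

variable {V : Type*} [Fintype V] [DecidableEq V]

/-- Finset version of `EdgesWithin`. -/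
noncomputable def finE (G : SimpleGraph V) (X : Finset V) : Finset (Sym2 V) :=
  Finset.univ.filter (· ∈ EdgesWithin G (↑X : Set V))

lemma ncard_edgesWithin (G : SimpleGraph V) (X : Finset V) :
    (EdgesWithin G (↑X : Set V)).ncard = (finE G X).card := by
  have h : EdgesWithin G (↑X : Set V) = ↑(finE G X) := by
    ext e; simp [finE]
  rw [h, Set.ncard_coe_finset]

lemma mk_mem_finE {G : SimpleGraph V} {X : Finset V} {a b : V} :
    s(a, b) ∈ finE G X ↔ G.Adj a b ∧ a ∈ X ∧ b ∈ X := by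
  simp only [finE, Finset.mem_filter, Finset.mem_univ, true_and, EdgesWithin,
    Set.mem_setOf_eq, SimpleGraph.mem_edgeSet, Sym2.mem_iff]
  constructor
  · rintro ⟨hadj, h⟩
    exact ⟨hadj, h a (Or.inl rfl), h b (Or.inr rfl)⟩
  · rintro ⟨hadj, ha, hb⟩
    refine ⟨hadj, ?_⟩
    rintro v (rfl | rfl) <;> assumption

/-- Double counting: the sum over `v ∈ S₃` of the number of neighbours of `v` inside `S`
is at most `e(S₃) + e(S)`, when `S₃ ⊆ S`. -/
lemma sum_deg_le (G : SimpleGraph V) (S₃ S : Finset V) (hsub : S₃ ⊆ S) :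
    (∑ v ∈ S₃, (S.filter (fun u => G.Adj v u)).card)
      ≤ (finE G S₃).card + (finE G S).card := by
  set A : Finset (V × V) := (S₃ ×ˢ S).filter (fun p => G.Adj p.1 p.2) with hA
  have hAmem : ∀ p : V × V, p ∈ A ↔ p.1 ∈ S₃ ∧ p.2 ∈ S ∧ G.Adj p.1 p.2 := by
    intro p
    simp only [hA, Finset.mem_filter, Finset.mem_product]
    tauto
  have h1 : (∑ v ∈ S₃, (S.filter (fun u => G.Adj v u)).card) = A.card := by
    rw [Finset.card_eq_sum_card_fiberwise (f := Prod.fst) (t := S₃)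
      (fun p hp => ((hAmem p).1 hp).1)]
    refine Finset.sum_congr rfl (fun v hv => ?_)
    have himg : A.filter (fun p => p.1 = v)
        = (S.filter (fun u => G.Adj v u)).image (fun u => (v, u)) := by
      ext ⟨a, b⟩
      simp only [Finset.mem_filter, Finset.mem_image]
      constructor
      · rintro ⟨hab, rfl⟩
        obtain ⟨_, h2, h3⟩ := (hAmem (a, b)).1 hab
        exact ⟨b, ⟨h2, h3⟩, rfl⟩
      · rintro ⟨u, ⟨huS, hadj⟩, huv⟩
        obtain ⟨h1, h2⟩ := Prod.ext_iff.1 huv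
        subst h1; subst h2
        exact ⟨(hAmem _).2 ⟨hv, huS, hadj⟩, rfl⟩
    rw [himg, Finset.card_image_of_injective _ (fun a b h => by simpa using h)]
  rw [h1]
  set g : V × V → Sym2 V := fun p => s(p.1, p.2) with hg
  have himg : A.image g ⊆ finE G S := by
    intro e he
    obtain ⟨p, hp, rfl⟩ := Finset.mem_image.1 he
    obtain ⟨h1', h2', h3'⟩ := (hAmem p).1 hp
    exact mk_mem_finE.2 ⟨h3', hsub h1', h2'⟩
  have hbound : ∀ e ∈ A.image g,
      (A.filter (fun p => g p = e)).card ≤ (if e ∈ finE G S₃ then 1 else 0) + 1 := by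
    intro e he
    obtain ⟨⟨a, b⟩, hab, rfl⟩ := Finset.mem_image.1 he
    obtain ⟨haS₃, hbS, hadj⟩ := (hAmem (a, b)).1 hab
    by_cases hcase : g (a, b) ∈ finE G S₃
    · rw [if_pos hcase]
      refine le_trans (Finset.card_le_card (fun p hp => ?_))
        (le_trans (Finset.card_insert_le (a, b) {(b, a)}) (by simp))
      obtain ⟨hpA, hpe⟩ := Finset.mem_filter.1 hp
      have := hpe
      rcases Sym2.eq_iff.1 this with ⟨h1', h2'⟩ | ⟨h1', h2'⟩
      · simp [Finset.mem_insert, Prod.ext_iff, h1', h2']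
      · simp [Finset.mem_insert, Prod.ext_iff, h1', h2']
    · rw [if_neg hcase]
      have hbS₃ : b ∉ S₃ := fun hb => hcase (mk_mem_finE.2 ⟨hadj, haS₃, hb⟩)
      refine Finset.card_le_one.2 (fun p hp q hq => ?_)
      have hform : ∀ r ∈ A.filter (fun p => g p = g (a, b)), r = (a, b) := by
        intro r hr
        obtain ⟨hrA, hre⟩ := Finset.mem_filter.1 hr
        rcases Sym2.eq_iff.1 hre with ⟨h1', h2'⟩ | ⟨h1', h2'⟩
        · exact Prod.ext h1' h2'
        · exfalso
          have := ((hAmem r).1 hrA).1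
          rw [h1'] at this
          exact hbS₃ this
      rw [hform p hp, hform q hq]
  calc A.card = ∑ e ∈ A.image g, (A.filter (fun p => g p = e)).card :=
        Finset.card_eq_sum_card_image g A
  _ ≤ ∑ e ∈ A.image g, ((if e ∈ finE G S₃ then 1 else 0) + 1) := Finset.sum_le_sum hbound
  _ = (∑ e ∈ A.image g, if e ∈ finE G S₃ then 1 else 0) + (A.image g).card := by
        rw [Finset.sum_add_distrib, Finset.sum_const, smul_eq_mul, mul_one]
  _ = ((A.image g).filter (fun e => e ∈ finE G S₃)).card + (A.image g).card := by
        rw [Finset.card_filter]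
  _ ≤ (finE G S₃).card + (finE G S).card :=
        Nat.add_le_add (Finset.card_le_card (fun e he => (Finset.mem_filter.1 he).2))
          (Finset.card_le_card himg)

/-- `c` is a proper colouring on the set `S`. -/
def ProperOn (G : SimpleGraph V) (c : V → Fin 4) (S : Finset V) : Prop :=
  ∀ ⦃u⦄, u ∈ S → ∀ ⦃w⦄, w ∈ S → G.Adj u w → c u ≠ c w

lemma ProperOn.mono {G : SimpleGraph V} {c : V → Fin 4} {S T : Finset V}
    (hST : S ⊆ T) (h : ProperOn G c T) : ProperOn G c S :=
  fun _ hu _ hw => h (hST hu) (hST hw)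

/-- The literal `l` holds under the colouring `c`. -/
def LitH (c : V → Fin 4) (l : (V × Fin 4) × Bool) : Prop :=
  (c l.1.1 = l.1.2 ↔ l.2 = true)

/-- The clause `C` is satisfied by the colouring `c`. -/
def SatC (c : V → Fin 4) (C : Clause (V × Fin 4)) : Prop := ∃ l ∈ C, LitH c l

/-- Every colouring proper on `S` satisfies `C`. -/
def Implies (G : SimpleGraph V) (S : Finset V) (C : Clause (V × Fin 4)) : Prop :=
  ∀ c : V → Fin 4, ProperOn G c S → SatC c C

lemma Implies.mono {G : SimpleGraph V} {S T : Finset V} {C : Clause (V × Fin 4)}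
    (hST : S ⊆ T) (h : Implies G S C) : Implies G T C :=
  fun c hc => h c (hc.mono hST)

/-- The set of vertices occurring in negative literals of `C`. -/
def negVerts (C : Clause (V × Fin 4)) : Finset V :=
  (C.filter (fun l => l.2 = false)).image (fun l => l.1.1)

lemma mem_negVerts {C : Clause (V × Fin 4)} {l : (V × Fin 4) × Bool}
    (hl : l ∈ C) (h2 : l.2 = false) : l.1.1 ∈ negVerts C :=
  Finset.mem_image.2 ⟨l, Finset.mem_filter.2 ⟨hl, h2⟩, rfl⟩

lemma finE_card_le {G : SimpleGraph V} {ℓ : ℕ} {ε : ℝ} (hsp : Sparse G ℓ (1/2 - ε))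
    {X : Finset V} (hX : X.card ≤ ℓ) :
    ((finE G X).card : ℝ) ≤ (3/2 - ε) * X.card := by
  have h := hsp (↑X : Set V) (by rw [Set.ncard_coe_finset]; exact hX)
  rw [ncard_edgesWithin, Set.ncard_coe_finset] at h
  rw [show (1 : ℝ) + (1/2 - ε) = 3/2 - ε by ring] at h
  exact h

/-- Sparse graphs are locally 4-colourable. -/
lemma exists_proper {G : SimpleGraph V} {ℓ : ℕ} {ε : ℝ} (hε : 0 < ε)
    (hsp : Sparse G ℓ (1/2 - ε)) :
    ∀ n (S : Finset V), S.card ≤ n → S.card ≤ ℓ → ∃ c : V → Fin 4, ProperOn G c S := by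
  intro n
  induction n with
  | zero =>
    intro S hS _
    have hS0 : S = ∅ := Finset.card_eq_zero.1 (Nat.le_zero.1 hS)
    exact ⟨fun _ => 0, fun u hu => by simp [hS0] at hu⟩
  | succ n ih =>
    intro S hS hSℓ
    rcases Finset.eq_empty_or_nonempty S with rfl | hne
    · exact ⟨fun _ => 0, fun u hu => by simp at hu⟩
    have hlow : ∃ v ∈ S, (S.filter (fun u => G.Adj v u)).card ≤ 3 := by
      by_contra hcon
      push_neg at hcon
      have hsum : 4 * S.card ≤ ∑ v ∈ S, (S.filter (fun u => G.Adj v u)).card := by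
        calc 4 * S.card = ∑ _v ∈ S, 4 := by rw [Finset.sum_const, smul_eq_mul, mul_comm]
        _ ≤ _ := Finset.sum_le_sum (fun v hv => hcon v hv)
      have hDC := sum_deg_le G S S (Finset.Subset.refl S)
      have hE := finE_card_le hsp hSℓ
      have hcard : (0:ℝ) < (S.card : ℝ) := by
        exact_mod_cast Finset.card_pos.2 hne
      have c1 : (4 * (S.card:ℝ)) ≤ ((finE G S).card : ℝ) + ((finE G S).card : ℝ) := by
        have := le_trans hsum hDC
        exact_mod_cast this
      nlinarith [hE, hcard, hε, c1]
    obtain ⟨v, hvS, hdeg⟩ := hlow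
    have hcard' : (S.erase v).card ≤ n := by
      rw [Finset.card_erase_of_mem hvS]
      omega
    obtain ⟨c, hc⟩ := ih (S.erase v) hcard'
      (le_trans (Finset.card_le_card (Finset.erase_subset _ _)) hSℓ)
    set nbrs := (S.filter (fun u => G.Adj v u)).image c with hnbrs
    have hfree : ∃ i : Fin 4, i ∉ nbrs := by
      by_contra h
      push_neg at h
      have hsub : (Finset.univ : Finset (Fin 4)) ⊆ nbrs := fun i _ => h i
      have h4 : 4 ≤ nbrs.card := by
        have := Finset.card_le_card hsub
        simpa using this
      have h3 : nbrs.card ≤ 3 := le_trans Finset.card_image_le hdeg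
      omega
    obtain ⟨i, hi⟩ := hfree
    refine ⟨Function.update c v i, ?_⟩
    intro u hu w hw hadj
    by_cases huv : u = v
    · rw [huv] at hadj ⊢
      by_cases hwv : w = v
      · rw [hwv] at hadj; exact absurd hadj G.irrefl
      · rw [Function.update_self, Function.update_of_ne hwv]
        intro h
        refine hi ?_
        rw [h]
        exact Finset.mem_image.2 ⟨w, Finset.mem_filter.2 ⟨hw, hadj⟩, rfl⟩
    · by_cases hwv : w = v
      · rw [hwv] at hadj ⊢
        rw [Function.update_of_ne huv, Function.update_self]
        intro h
        refine hi ?_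
        rw [← h]
        exact Finset.mem_image.2 ⟨u, Finset.mem_filter.2 ⟨hu, hadj.symm⟩, rfl⟩
      · rw [Function.update_of_ne huv, Function.update_of_ne hwv]
        exact hc (Finset.mem_erase.2 ⟨huv, hu⟩) (Finset.mem_erase.2 ⟨hwv, hw⟩) hadj

/-- Axioms of `Col(G,4)` are implied by the formula restricted to their negative vertices. -/
lemma axiom_implies {G : SimpleGraph V} {C : Clause (V × Fin 4)} (hC : C ∈ ColCNF G 4) :
    Implies G (negVerts C) C := by
  rcases hC with ⟨v, rfl⟩ | ⟨v, i, i', hne, rfl⟩ | ⟨u, v, i, hadj, rfl⟩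
  · intro c _
    exact ⟨((v, c v), true), Finset.mem_image.2 ⟨c v, Finset.mem_univ _, rfl⟩,
      by simp [LitH]⟩
  · intro c _
    by_cases h : c v = i
    · refine ⟨((v, i'), false), by simp, ?_⟩
      simp only [LitH]
      simp only [Bool.false_eq_true, iff_false]
      rw [h]
      exact hne
    · exact ⟨((v, i), false), by simp, by simp [LitH, h]⟩
  · intro c hc
    have hu : u ∈ negVerts {((u, i), false), ((v, i), false)} :=
      mem_negVerts (Finset.mem_insert_self _ _) rfl
    have hv : v ∈ negVerts {((u, i), false), ((v, i), false)} :=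
      mem_negVerts (Finset.mem_insert_of_mem (Finset.mem_singleton_self _)) rfl
    have huv : c u ≠ c v := hc hu hv hadj
    by_cases h : c u = i
    · have h' : c v ≠ i := fun h'' => huv (h.trans h''.symm)
      exact ⟨((v, i), false), by simp, by simp [LitH, h']⟩
    · exact ⟨((u, i), false), by simp, by simp [LitH, h]⟩

/-- Soundness of the resolution rule for our semantic implication. -/
lemma resolvent_implies {G : SimpleGraph V} {C₁ C₂ C : Clause (V × Fin 4)}
    (x : V × Fin 4) (hx1 : (x, true) ∈ C₁) (hx2 : (x, false) ∈ C₂)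
    (hC : C = C₁.erase (x, true) ∪ C₂.erase (x, false))
    {S₁ S₂ : Finset V}
    (h₁ : Implies G (S₁ ∪ negVerts C₁) C₁) (h₂ : Implies G (S₂ ∪ negVerts C₂) C₂) :
    Implies G ((S₁ ∪ S₂ ∪ {x.1}) ∪ negVerts C) C := by
  intro c hc
  have hn₁ : negVerts C₁ ⊆ negVerts C := by
    intro a ha
    obtain ⟨l, hl, rfl⟩ := Finset.mem_image.1 ha
    obtain ⟨hlC, hl2⟩ := Finset.mem_filter.1 hl
    refine mem_negVerts ?_ hl2
    rw [hC]
    refine Finset.mem_union_left _ (Finset.mem_erase.2 ⟨?_, hlC⟩)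
    intro h
    rw [h] at hl2
    simp at hl2
  have hn₂ : negVerts C₂ ⊆ negVerts C ∪ {x.1} := by
    intro a ha
    obtain ⟨l, hl, rfl⟩ := Finset.mem_image.1 ha
    obtain ⟨hlC, hl2⟩ := Finset.mem_filter.1 hl
    by_cases he : l = (x, false)
    · subst he
      exact Finset.mem_union_right _ (Finset.mem_singleton_self _)
    · refine Finset.mem_union_left _ (mem_negVerts ?_ hl2)
      rw [hC]
      exact Finset.mem_union_right _ (Finset.mem_erase.2 ⟨he, hlC⟩)
  have hsub₁ : S₁ ∪ negVerts C₁ ⊆ (S₁ ∪ S₂ ∪ {x.1}) ∪ negVerts C := by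
    refine Finset.union_subset ?_ (hn₁.trans Finset.subset_union_right)
    exact (Finset.subset_union_left.trans Finset.subset_union_left).trans
      Finset.subset_union_left
  have hsub₂ : S₂ ∪ negVerts C₂ ⊆ (S₁ ∪ S₂ ∪ {x.1}) ∪ negVerts C := by
    refine Finset.union_subset ?_ ?_
    · exact (Finset.subset_union_right.trans Finset.subset_union_left).trans
        Finset.subset_union_left
    · refine hn₂.trans (Finset.union_subset Finset.subset_union_right ?_)
      exact Finset.subset_union_right.trans Finset.subset_union_left
  obtain ⟨l₁, hl₁, hH₁⟩ := h₁ c (hc.mono hsub₁)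
  by_cases he : l₁ = (x, true)
  · subst he
    have hcx : c x.1 = x.2 := hH₁.2 rfl
    obtain ⟨l₂, hl₂, hH₂⟩ := h₂ c (hc.mono hsub₂)
    by_cases he₂ : l₂ = (x, false)
    · subst he₂
      have := hH₂.1 hcx
      simp at this
    · exact ⟨l₂, hC ▸ Finset.mem_union_right _ (Finset.mem_erase.2 ⟨he₂, hl₂⟩), hH₂⟩
  · exact ⟨l₁, hC ▸ Finset.mem_union_left _ (Finset.mem_erase.2 ⟨he, hl₁⟩), hH₁⟩

/-- The core width lower bound: a minimal implying set of size in `(t, 2t+1]` forces a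
wide clause, contradiction with all clauses narrow. -/
lemma core {G : SimpleGraph V} {ℓ t : ℕ} {ε : ℝ} (hε : 0 < ε) (hεle : ε ≤ 1/4)
    (hsp : Sparse G ℓ (1/2 - ε)) {C : Clause (V × Fin 4)} {S₃ : Finset V}
    (hmin : ∀ v ∈ S₃, ¬ Implies G ((S₃.erase v) ∪ negVerts C) C)
    (hQ : Implies G (S₃ ∪ negVerts C) C)
    (hdisj : ∀ v ∈ S₃, v ∉ negVerts C)
    (hs1 : t + 1 ≤ S₃.card) (hs2 : S₃.card ≤ 2 * t + 1)
    (hwℓ : 4 * C.card + 1 ≤ ℓ) (ht1 : 8 * t + 3 ≤ 3 * ℓ) (ht2 : 3 * ℓ ≤ 8 * t + 14) :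
    False := by
  set NC := negVerts C with hNC
  set S : Finset V := S₃ ∪ NC with hSdef
  have hch : ∀ v ∈ S₃, ∃ c : V → Fin 4,
      ProperOn G c ((S₃.erase v) ∪ NC) ∧ ¬ SatC c C := by
    intro v hv
    have h := hmin v hv
    rw [Implies] at h
    push_neg at h
    exact h
  choose! cv hcvP hcvN using hch
  set free : V → Finset (Fin 4) :=
    fun v => Finset.univ.filter (fun i => ∀ u ∈ S, G.Adj v u → cv v u ≠ i) with hfreedef
  have key : ∀ v ∈ S₃, ∀ i ∈ free v, ((v, i), true) ∈ C := by
    intro v hv i hi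
    have hifree : ∀ u ∈ S, G.Adj v u → cv v u ≠ i := (Finset.mem_filter.1 hi).2
    set c' := Function.update (cv v) v i with hc'
    have haux : ∀ u, u ∈ S → u ≠ v → u ∈ (S₃.erase v) ∪ NC := by
      intro u hu hne
      rcases Finset.mem_union.1 hu with h | h
      · exact Finset.mem_union_left _ (Finset.mem_erase.2 ⟨hne, h⟩)
      · exact Finset.mem_union_right _ h
    have hproper : ProperOn G c' S := by
      intro u hu w hw hadj
      by_cases huv : u = v
      · rw [huv] at hadj ⊢
        by_cases hwv : w = v
        · rw [hwv] at hadj; exact absurd hadj G.irrefl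
        · rw [hc', Function.update_self, Function.update_of_ne hwv]
          exact fun h => hifree w hw hadj h.symm
      · by_cases hwv : w = v
        · rw [hwv] at hadj ⊢
          rw [hc', Function.update_of_ne huv, Function.update_self]
          exact hifree u hu hadj.symm
        · rw [hc', Function.update_of_ne huv, Function.update_of_ne hwv]
          exact hcvP v hv (haux u hu huv) (haux w hw hwv) hadj
    obtain ⟨l, hlC, hlH⟩ := hQ c' hproper
    by_cases h1 : l.1.1 = v
    · by_cases h2 : l.2 = true
      · have hcv : c' v = l.1.2 := by
          have := hlH
          rw [LitH, h1] at this
          exact this.2 h2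
        have hl12 : l.1.2 = i := by
          rw [hc', Function.update_self] at hcv
          exact hcv.symm
        have hleq : l = ((v, i), true) := by
          have : l = ((l.1.1, l.1.2), l.2) := by simp
          rw [this, h1, h2, hl12]
        rwa [hleq] at hlC
      · have hb : l.2 = false := by
          revert h2; cases l.2 <;> simp
        exact absurd (h1 ▸ mem_negVerts hlC hb) (hdisj v hv)
    · exfalso
      apply hcvN v hv
      refine ⟨l, hlC, ?_⟩
      have hcc : c' l.1.1 = cv v l.1.1 := Function.update_of_ne h1 _ _
      rw [LitH] at hlH ⊢
      rwa [hcc] at hlH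
  -- counting
  set d : V → ℕ := fun v => (S.filter (fun u => G.Adj v u)).card with hd
  have hfree_d : ∀ v ∈ S₃, 4 ≤ (free v).card + d v := by
    intro v hv
    have hcover : (Finset.univ : Finset (Fin 4))
        ⊆ free v ∪ (S.filter (fun u => G.Adj v u)).image (cv v) := by
      intro i _
      by_cases h : ∀ u ∈ S, G.Adj v u → cv v u ≠ i
      · exact Finset.mem_union_left _ (Finset.mem_filter.2 ⟨Finset.mem_univ _, h⟩)
      · push_neg at h
        obtain ⟨u, hu, hadj, hcu⟩ := h
        exact Finset.mem_union_right _
          (Finset.mem_image.2 ⟨u, Finset.mem_filter.2 ⟨hu, hadj⟩, hcu⟩)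
    calc 4 = (Finset.univ : Finset (Fin 4)).card := by simp
    _ ≤ (free v ∪ (S.filter (fun u => G.Adj v u)).image (cv v)).card :=
        Finset.card_le_card hcover
    _ ≤ (free v).card + ((S.filter (fun u => G.Adj v u)).image (cv v)).card :=
        Finset.card_union_le _ _
    _ ≤ (free v).card + d v := Nat.add_le_add_left Finset.card_image_le _
  set posv := S₃.biUnion (fun v => (free v).image (fun i => ((v, i), true))) with hposv
  set negC := C.filter (fun l => l.2 = false) with hnegC
  have hposvC : posv ⊆ C := by
    intro l hl
    obtain ⟨v, hv, hl'⟩ := Finset.mem_biUnion.1 hl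
    obtain ⟨i, hi, rfl⟩ := Finset.mem_image.1 hl'
    exact key v hv i hi
  have hdisj2 : Disjoint posv negC := by
    rw [Finset.disjoint_left]
    intro l hl hlneg
    obtain ⟨v, hv, hl'⟩ := Finset.mem_biUnion.1 hl
    obtain ⟨i, hi, rfl⟩ := Finset.mem_image.1 hl'
    have := (Finset.mem_filter.1 hlneg).2
    simp at this
  have hcount : posv.card + negC.card ≤ C.card := by
    rw [← Finset.card_union_of_disjoint hdisj2]
    exact Finset.card_le_card (Finset.union_subset hposvC (Finset.filter_subset _ _))
  have hposcard : posv.card = ∑ v ∈ S₃, (free v).card := by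
    rw [hposv, Finset.card_biUnion]
    · exact Finset.sum_congr rfl (fun v hv =>
        Finset.card_image_of_injective _ (fun i j h => by simpa using h))
    · intro u hu v hv huv
      rw [Function.onFun, Finset.disjoint_left]
      rintro l hl1 hl2
      obtain ⟨i, _, rfl⟩ := Finset.mem_image.1 hl1
      obtain ⟨j, _, hl8⟩ := Finset.mem_image.1 hl2
      apply huv
      have := congrArg (fun q : (V × Fin 4) × Bool => q.1.1) hl8
      simpa using this.symm
  have hsum1 : 4 * S₃.card ≤ (∑ v ∈ S₃, (free v).card) + (∑ v ∈ S₃, d v) := by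
    calc 4 * S₃.card = ∑ _v ∈ S₃, 4 := by rw [Finset.sum_const, smul_eq_mul, mul_comm]
    _ ≤ ∑ v ∈ S₃, ((free v).card + d v) := Finset.sum_le_sum hfree_d
    _ = _ := Finset.sum_add_distrib
  have hDC : (∑ v ∈ S₃, d v) ≤ (finE G S₃).card + (finE G S).card :=
    sum_deg_le G S₃ S Finset.subset_union_left
  have hNCcard : NC.card ≤ negC.card := Finset.card_image_le
  have hnegw : negC.card ≤ C.card := Finset.card_filter_le _ _
  have hS₃ℓ : S₃.card ≤ ℓ := by omega
  have hScard : S.card ≤ S₃.card + NC.card := Finset.card_union_le _ _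
  have hSℓ : S.card ≤ ℓ := by omega
  have hE3 := finE_card_le hsp hS₃ℓ
  have hES := finE_card_le hsp hSℓ
  -- real arithmetic
  have h32 : (0:ℝ) ≤ 3/2 - ε := by linarith
  have h12 : (0:ℝ) ≤ 1/2 - ε := by linarith
  have hsc : (S.card : ℝ) ≤ (S₃.card : ℝ) + (NC.card : ℝ) := by exact_mod_cast hScard
  have hES2 : ((finE G S).card : ℝ) ≤ (3/2 - ε) * ((S₃.card : ℝ) + (NC.card : ℝ)) :=
    le_trans hES (mul_le_mul_of_nonneg_left hsc h32)
  have hsumfree : (∑ v ∈ S₃, (free v).card) + negC.card ≤ C.card := by omega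
  have hr1 : ((∑ v ∈ S₃, (free v).card : ℕ) : ℝ) + (negC.card : ℝ) ≤ (C.card : ℝ) := by
    exact_mod_cast hsumfree
  have hr2 : (4 : ℝ) * (S₃.card : ℝ)
      ≤ ((∑ v ∈ S₃, (free v).card : ℕ) : ℝ) + ((∑ v ∈ S₃, d v : ℕ) : ℝ) := by
    exact_mod_cast hsum1
  have hr3 : ((∑ v ∈ S₃, d v : ℕ) : ℝ)
      ≤ ((finE G S₃).card : ℝ) + ((finE G S).card : ℝ) := by exact_mod_cast hDC
  have hncn : (NC.card : ℝ) ≤ (negC.card : ℝ) := by exact_mod_cast hNCcard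
  have hnw : (negC.card : ℝ) ≤ (C.card : ℝ) := by exact_mod_cast hnegw
  have hb2 : (3/2 - ε) * (NC.card : ℝ) ≤ (3/2 - ε) * (negC.card : ℝ) :=
    mul_le_mul_of_nonneg_left hncn h32
  have hb3 : (1/2 - ε) * (negC.card : ℝ) ≤ (1/2 - ε) * (C.card : ℝ) :=
    mul_le_mul_of_nonneg_left hnw h12
  have hmain : (1 + 2*ε) * (S₃.card : ℝ) ≤ (3/2 - ε) * (C.card : ℝ) := by
    nlinarith [hr1, hr2, hr3, hE3, hES2, hb2, hb3]
  have hs'pos : (0:ℝ) < (S₃.card : ℝ) := by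
    have : 0 < S₃.card := by omega
    exact_mod_cast this
  have hεw : (0:ℝ) ≤ ε * (C.card : ℝ) := mul_nonneg hε.le (Nat.cast_nonneg _)
  have hεs : (0:ℝ) < ε * (S₃.card : ℝ) := mul_pos hε hs'pos
  have hfinalR : (2 : ℝ) * (S₃.card : ℝ) < 3 * (C.card : ℝ) := by nlinarith [hmain, hεw, hεs]
  have hfinal : 2 * S₃.card < 3 * C.card := by exact_mod_cast hfinalR
  omega

end Stmt3Aux

/-- if `G` is `(ℓ, 1/2 - ε)`-sparse, then every resolution refutation of
`Col(G,4)` contains a clause of width at least `ℓ/4`. -/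
theorem stmt_3 {V : Type*} [Fintype V] [DecidableEq V] (G : SimpleGraph V)
    (ℓ : ℕ) (ε : ℝ) (hℓ : 0 < ℓ) (hε : 0 < ε) (hsp : Sparse G ℓ (1 / 2 - ε))
    (D : List (Clause (V × Fin 4))) (hD : IsResolutionRefutation (ColCNF G 4) D) :
    ∃ C ∈ D, (ℓ : ℝ) / 4 ≤ (C.card : ℝ) := by
  classical
  open Stmt3Aux in
  -- WLOG ε ≤ 1/4
  set ε' := min ε (1/4) with hε'def
  have hε' : 0 < ε' := lt_min hε (by norm_num)
  have hεle : ε' ≤ 1/4 := min_le_right _ _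
  have hsp' : Sparse G ℓ (1/2 - ε') := by
    intro U hU
    refine le_trans (hsp U hU) (mul_le_mul_of_nonneg_right ?_ (Nat.cast_nonneg _))
    have := min_le_left ε (1/4)
    simp only [hε'def]
    linarith [min_le_left ε (1/4)]
  obtain ⟨hlast, hstep⟩ := hD
  by_contra hcon
  push_neg at hcon
  have hw : ∀ C ∈ D, 4 * C.card + 1 ≤ ℓ := by
    intro C hC
    have h := hcon C hC
    have h4 : (4 * C.card : ℝ) < (ℓ : ℝ) := by linarith
    have : 4 * C.card < ℓ := by exact_mod_cast h4
    omega
  set t := (3 * ℓ - 3) / 8 with htdef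
  have ht1 : 8 * t + 3 ≤ 3 * ℓ := by omega
  have ht2 : 3 * ℓ ≤ 8 * t + 14 := by omega
  have htℓ : t ≤ ℓ := by omega
  -- the invariant
  have inv : ∀ i (hi : i < D.length), ∃ S' : Finset V,
      S'.card ≤ t ∧ Stmt3Aux.Implies G (S' ∪ Stmt3Aux.negVerts (D[i]'hi)) (D[i]'hi) := by
    intro i
    induction i using Nat.strong_induction_on with
    | _ i IH =>
      intro hi
      rcases hstep i hi with hax | ⟨j, j', hj, hj', hres⟩
      · refine ⟨∅, Nat.zero_le _, ?_⟩
        have h := Stmt3Aux.axiom_implies (G := G) hax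
        rwa [Finset.empty_union]
      · obtain ⟨S₁, hc₁, h₁⟩ := IH j hj (hj.trans hi)
        obtain ⟨S₂, hc₂, h₂⟩ := IH j' hj' (hj'.trans hi)
        obtain ⟨x, hx1, hx2, hCe⟩ := hres
        set C := D[i]'hi with hCdef
        have h₀ : Stmt3Aux.Implies G ((S₁ ∪ S₂ ∪ {x.1}) ∪ Stmt3Aux.negVerts C) C :=
          Stmt3Aux.resolvent_implies x hx1 hx2 hCe h₁ h₂
        set S₀ := S₁ ∪ S₂ ∪ {x.1} with hS₀
        have hS₀card : S₀.card ≤ 2 * t + 1 := by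
          calc S₀.card ≤ (S₁ ∪ S₂).card + ({x.1} : Finset V).card :=
                Finset.card_union_le _ _
          _ ≤ S₁.card + S₂.card + 1 := by
                have := Finset.card_union_le S₁ S₂
                simp only [Finset.card_singleton]
                omega
          _ ≤ 2 * t + 1 := by omega
        have hne : (S₀.powerset.filter
            (fun R => Stmt3Aux.Implies G (R ∪ Stmt3Aux.negVerts C) C)).Nonempty :=
          ⟨S₀, Finset.mem_filter.2 ⟨Finset.mem_powerset.2 (Finset.Subset.refl _), h₀⟩⟩
        obtain ⟨R, hRmem, hRmin⟩ := Finset.exists_min_image _ Finset.card hne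
        have hRsub : R ⊆ S₀ := Finset.mem_powerset.1 (Finset.mem_filter.1 hRmem).1
        have hRimp : Stmt3Aux.Implies G (R ∪ Stmt3Aux.negVerts C) C :=
          (Finset.mem_filter.1 hRmem).2
        set S₃ := R \ Stmt3Aux.negVerts C with hS₃def
        have hS₃imp : Stmt3Aux.Implies G (S₃ ∪ Stmt3Aux.negVerts C) C := by
          rw [hS₃def, Finset.sdiff_union_self_eq_union]
          exact hRimp
        have hS₃mem : S₃ ∈ S₀.powerset.filter
            (fun R => Stmt3Aux.Implies G (R ∪ Stmt3Aux.negVerts C) C) :=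
          Finset.mem_filter.2
            ⟨Finset.mem_powerset.2 (Finset.sdiff_subset.trans hRsub), hS₃imp⟩
        have hS₃min : ∀ R' ∈ S₀.powerset.filter
            (fun R => Stmt3Aux.Implies G (R ∪ Stmt3Aux.negVerts C) C),
            S₃.card ≤ R'.card := by
          intro R' hR'
          exact le_trans (Finset.card_le_card Finset.sdiff_subset) (hRmin R' hR')
        by_cases hct : S₃.card ≤ t
        · exact ⟨S₃, hct, hS₃imp⟩
        · exfalso
          have hs1 : t + 1 ≤ S₃.card := by omega
          have hs2 : S₃.card ≤ 2 * t + 1 :=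
            le_trans (Finset.card_le_card (Finset.sdiff_subset.trans hRsub)) hS₀card
          have hdisj' : ∀ v ∈ S₃, v ∉ Stmt3Aux.negVerts C := fun v hv =>
            (Finset.mem_sdiff.1 hv).2
          have hmin : ∀ v ∈ S₃, ¬ Stmt3Aux.Implies G
              ((S₃.erase v) ∪ Stmt3Aux.negVerts C) C := by
            intro v hv himp
            have hmem' : S₃.erase v ∈ S₀.powerset.filter
                (fun R => Stmt3Aux.Implies G (R ∪ Stmt3Aux.negVerts C) C) :=
              Finset.mem_filter.2 ⟨Finset.mem_powerset.2
                ((Finset.erase_subset _ _).trans (Finset.sdiff_subset.trans hRsub)), himp⟩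
            have h := hS₃min _ hmem'
            rw [Finset.card_erase_of_mem hv] at h
            omega
          exact Stmt3Aux.core hε' hεle hsp' hmin hS₃imp hdisj' hs1 hs2
            (hw C (List.getElem_mem hi)) ht1 ht2
  -- conclude
  have hD0 : D ≠ [] := by
    intro h
    rw [h] at hlast
    simp at hlast
  have hlen : 0 < D.length := List.length_pos_iff.2 hD0
  have hlastel : D[D.length - 1]'(by omega) = ∅ := by
    have h1 : D[D.length - 1]? = some ∅ := by
      rw [← List.getLast?_eq_getElem?]
      exact hlast
    rw [List.getElem?_eq_getElem (by omega)] at h1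
    injection h1
  obtain ⟨S', hS't, hImp⟩ := inv (D.length - 1) (by omega)
  rw [hlastel] at hImp
  have hng : Stmt3Aux.negVerts (∅ : Clause (V × Fin 4)) = ∅ := by
    simp [Stmt3Aux.negVerts]
  rw [hng, Finset.union_empty] at hImp
  obtain ⟨c, hcp⟩ := Stmt3Aux.exists_proper hε' hsp' S'.card S' le_rfl (le_trans hS't htℓ)
  obtain ⟨l, hl, _⟩ := hImp c hcp
  exact absurd hl (Finset.notMem_empty l)
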